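/- For 0 < k1 < 1 and k2 > 1, define l1(k1, k2) = (2/√(1 − k1²)) · artanh(√(1 − k1²)/k2) and l2(k1, k2) = (2/√(k2² − 1)) · arctan(√(k2² − 1)/k1). Then the partial derivative of l1 with respect to k2 and the partial derivative of l2 with respect to k1 both exist and are both equal to 2/(1 − k1² − k2²). -/

import Mathlib

open Real

/-- The inverse hyperbolic tangent, `artanh x = (1/2) · log((1 + x)/(1 - x))`. -/
noncomputable def artanh (x : ℝ) : ℝ := Real.log ((1 + x) / (1 - x)) / 2

theorem stmt_6 (k1 k2 : ℝ) (hk1 : 0 < k1) (hk1' : k1 < 1) (hk2 : 1 < k2) :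
    HasDerivAt
      (fun y : ℝ => 2 / Real.sqrt (1 - k1 ^ 2) * _root_.artanh (Real.sqrt (1 - k1 ^ 2) / y))
      (2 / (1 - k1 ^ 2 - k2 ^ 2)) k2 ∧
    HasDerivAt
      (fun x : ℝ => 2 / Real.sqrt (k2 ^ 2 - 1) * Real.arctan (Real.sqrt (k2 ^ 2 - 1) / x))
      (2 / (1 - k1 ^ 2 - k2 ^ 2)) k1 := by
  have h1k1 : (0:ℝ) < 1 - k1 ^ 2 := by nlinarith
  have hk2sq : (0:ℝ) < k2 ^ 2 - 1 := by nlinarith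
  set a := Real.sqrt (1 - k1 ^ 2) with ha_def
  set b := Real.sqrt (k2 ^ 2 - 1) with hb_def
  have ha : 0 < a := Real.sqrt_pos.mpr h1k1
  have hb : 0 < b := Real.sqrt_pos.mpr hk2sq
  have ha2 : a ^ 2 = 1 - k1 ^ 2 := Real.sq_sqrt h1k1.le
  have hb2 : b ^ 2 = k2 ^ 2 - 1 := Real.sq_sqrt hk2sq.le
  have ha1 : a < 1 := by nlinarith [ha2]
  have hak2 : a < k2 := lt_trans ha1 hk2
  have hk2pos : (0:ℝ) < k2 := lt_trans one_pos hk2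
  have hden : (1 : ℝ) - k1 ^ 2 - k2 ^ 2 ≠ 0 := by nlinarith
  constructor
  · -- first part
    -- derivative of y ↦ a/y at k2 is -a/k2^2
    have hu : HasDerivAt (fun y : ℝ => a / y) (-(a / k2 ^ 2)) k2 := by
      have := (hasDerivAt_inv (ne_of_gt hk2pos)).const_mul a
      simpa [div_eq_mul_inv, mul_comm, mul_div_assoc, neg_div] using this
    have h1p : 0 < 1 + a / k2 := by positivity
    have h1m : 0 < 1 - a / k2 := by
      have : a / k2 < 1 := (div_lt_one hk2pos).mpr hak2
      linarith
    have hlog1 := (((hasDerivAt_const k2 (1:ℝ)).add hu).log (ne_of_gt h1p))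
    have hlog2 := (((hasDerivAt_const k2 (1:ℝ)).sub hu).log (ne_of_gt h1m))
    have hg := (hlog1.sub hlog2).const_mul (1 / a)
    have heq : (fun y : ℝ => 2 / a * _root_.artanh (a / y)) =ᶠ[nhds k2]
        (fun y : ℝ => (1 / a) * (Real.log (1 + a / y) - Real.log (1 - a / y))) := by
      have hopen : IsOpen {y : ℝ | a < y} := isOpen_lt continuous_const continuous_id
      filter_upwards [hopen.mem_nhds (by simpa using hak2)] with y hy
      have hy0 : 0 < y := lt_trans ha hy
      have h1p' : (0:ℝ) < 1 + a / y := by positivity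
      have h1m' : (0:ℝ) < 1 - a / y := by
        have : a / y < 1 := (div_lt_one hy0).mpr hy
        linarith
      simp only [_root_.artanh]
      rw [Real.log_div (ne_of_gt h1p') (ne_of_gt h1m')]
      field_simp
    refine (hg.congr_of_eventuallyEq heq).congr_deriv ?_
    have hne1 : (1:ℝ) + a / k2 ≠ 0 := ne_of_gt h1p
    have hne2 : (1:ℝ) - a / k2 ≠ 0 := ne_of_gt h1m
    have hd : (1:ℝ) - k1 ^ 2 - k2 ^ 2 = a ^ 2 - k2 ^ 2 := by rw [ha2]
    have hne3 : k2 - a ≠ 0 := sub_ne_zero.mpr hak2.ne'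
    have hne4 : k2 + a ≠ 0 := by positivity
    have hda : a ^ 2 - k2 ^ 2 ≠ 0 := by nlinarith
    rw [hd]
    simp only [Pi.add_apply, Pi.sub_apply]
    field_simp
    ring
  · -- second part
    have hu : HasDerivAt (fun x : ℝ => b / x) (-(b / k1 ^ 2)) k1 := by
      have := (hasDerivAt_inv (ne_of_gt hk1)).const_mul b
      simpa [div_eq_mul_inv, mul_comm, mul_div_assoc, neg_div] using this
    have harctan : HasDerivAt (fun x : ℝ => Real.arctan (b / x))
        ((1 / (1 + (b / k1) ^ 2)) * (-(b / k1 ^ 2))) k1 :=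
      (Real.hasDerivAt_arctan (b / k1)).comp k1 hu
    have hg := harctan.const_mul (2 / b)
    refine hg.congr_deriv ?_
    have hne : (1:ℝ) + (b / k1) ^ 2 ≠ 0 := by positivity
    have hd : (1:ℝ) - k1 ^ 2 - k2 ^ 2 = -(k1 ^ 2 + b ^ 2) := by rw [hb2]; ring
    have hda : k1 ^ 2 + b ^ 2 ≠ 0 := by positivity
    rw [hd]
    have hne' : (-b ^ 2 - k1 ^ 2 : ℝ) ≠ 0 := by nlinarith [sq_nonneg b]
    field_simp
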